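/- Let a control-affine system be locally accessible on a positively invariant set M ⊂ ℝ^d and let K ⊂ M be compact. Then there are at most finitely many invariant control sets C with C ∩ K ≠ ∅. -/

import Mathlib

open MeasureTheory Set Topology

/-- A control-affine system `ẋ = f₀(x) + ∑ vᵢ(t) fᵢ(x)` on `ℝ^d` with Lipschitz
continuous vector fields and compact control range `V ⊆ ℝ^m`.  The (unique, global)
solutions are bundled as the data `φ` together with their defining properties. -/
structure CAS (d m : ℕ) where
  /-- the drift vector field -/
  f0 : (Fin d → ℝ) → (Fin d → ℝ)
  /-- the control vector fields -/
  f : Fin m → (Fin d → ℝ) → (Fin d → ℝ)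
  /-- the control range -/
  V : Set (Fin m → ℝ)
  lip0 : ∃ K, LipschitzWith K f0
  lip : ∀ i, ∃ K, LipschitzWith K (f i)
  V_compact : IsCompact V
  /-- the solution map: `φ x v t` is the solution at time `t` starting at `x` with control `v` -/
  φ : (Fin d → ℝ) → (ℝ → (Fin m → ℝ)) → ℝ → (Fin d → ℝ)
  φ_init : ∀ x v, φ x v 0 = x
  φ_cont : ∀ x v, Continuous (φ x v)
  /-- solutions are (Carathéodory) solutions of the ODE -/
  φ_sol : ∀ (x : Fin d → ℝ) (v : ℝ → (Fin m → ℝ)), Measurable v → (∀ t, v t ∈ V) →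
    ∀ t, 0 ≤ t →
      φ x v t = x + ∫ s in (0:ℝ)..t, (f0 (φ x v s) + ∑ i, v s i • f (i) (φ x v s))

namespace CAS

variable {d m : ℕ}

/-- the set of admissible controls -/
def ctrl (S : CAS d m) : Set (ℝ → (Fin m → ℝ)) :=
  {v | Measurable v ∧ ∀ t, v t ∈ S.V}

/-- a control is piecewise constant if it has only finitely many discontinuities on
every bounded interval, i.e. it is constant between the members of a sequence of
switching times tending to infinity -/
def PiecewiseConst (v : ℝ → (Fin m → ℝ)) : Prop :=
  ∃ τ : ℕ → ℝ, τ 0 = 0 ∧ StrictMono τ ∧ Filter.Tendsto τ Filter.atTop Filter.atTop ∧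
    ∀ n, ∀ t ∈ Ico (τ n) (τ (n + 1)), v t = v (τ n)

/-- the reachable set from `x` -/
def reach (S : CAS d m) (x : Fin d → ℝ) : Set (Fin d → ℝ) :=
  {y | ∃ v ∈ S.ctrl, ∃ t ≥ (0:ℝ), S.φ x v t = y}

/-- the set reachable from `x` with piecewise constant controls -/
def reachPC (S : CAS d m) (x : Fin d → ℝ) : Set (Fin d → ℝ) :=
  {y | ∃ v ∈ S.ctrl, PiecewiseConst v ∧ ∃ t ≥ (0:ℝ), S.φ x v t = y}

/-- the reachable set from `x` up to time `T` -/
def reachLe (S : CAS d m) (T : ℝ) (x : Fin d → ℝ) : Set (Fin d → ℝ) :=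
  {y | ∃ v ∈ S.ctrl, ∃ t ∈ Icc (0:ℝ) T, S.φ x v t = y}

/-- the controllable set to `x` up to time `T` -/
def contrLe (S : CAS d m) (T : ℝ) (x : Fin d → ℝ) : Set (Fin d → ℝ) :=
  {y | ∃ v ∈ S.ctrl, ∃ t ∈ Icc (0:ℝ) T, S.φ y v t = x}

/-- positive invariance of a set -/
def posInv (S : CAS d m) (M : Set (Fin d → ℝ)) : Prop :=
  ∀ x ∈ M, ∀ v ∈ S.ctrl, ∀ t ≥ (0:ℝ), S.φ x v t ∈ M

/-- invariance of a set -/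
def inv (S : CAS d m) (M : Set (Fin d → ℝ)) : Prop :=
  ∀ t ≥ (0:ℝ), {y | ∃ x ∈ M, ∃ v ∈ S.ctrl, S.φ x v t = y} = M

/-- the two defining properties (i) controlled invariance and (ii) approximate
reachability of a control set -/
def controlSetProps (S : CAS d m) (D : Set (Fin d → ℝ)) : Prop :=
  (∀ x ∈ D, ∃ v ∈ S.ctrl, ∀ t ≥ (0:ℝ), S.φ x v t ∈ D) ∧
  (∀ x ∈ D, D ⊆ closure (S.reach x))

/-- a control set: a maximal nonempty set with the properties `controlSetProps` -/
def isControlSet (S : CAS d m) (D : Set (Fin d → ℝ)) : Prop :=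
  D.Nonempty ∧ S.controlSetProps D ∧
  ∀ D', D ⊆ D' → S.controlSetProps D' → D' = D

/-- an invariant control set -/
def isInvControlSet (S : CAS d m) (C : Set (Fin d → ℝ)) : Prop :=
  S.isControlSet C ∧ ∀ x ∈ C, closure C = closure (S.reach x)

/-- local accessibility at a point -/
def locAccAt (S : CAS d m) (x : Fin d → ℝ) : Prop :=
  ∀ T > (0:ℝ), ∀ N ∈ 𝓝 x,
    (interior (S.reachLe T x) ∩ N).Nonempty ∧ (interior (S.contrLe T x) ∩ N).Nonempty

/-- local accessibility on a set -/
def locAccOn (S : CAS d m) (M : Set (Fin d → ℝ)) : Prop :=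
  ∀ x ∈ M, S.locAccAt x

/-- the domain of attraction of a set -/
def domAttr (S : CAS d m) (C : Set (Fin d → ℝ)) : Set (Fin d → ℝ) :=
  {x | (closure (S.reach x) ∩ C).Nonempty}

/-- the strict domain of attraction of an invariant control set -/
def domAttrStrict (S : CAS d m) (C : Set (Fin d → ℝ)) : Set (Fin d → ℝ) :=
  {x | (closure (S.reach x) ∩ C).Nonempty ∧
    ∀ C', S.isInvControlSet C' → (closure (S.reach x) ∩ C').Nonempty → C' = C}

/-- Grönwall estimate: continuous dependence on initial conditions, uniformly over
admissible controls. -/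
theorem gronwall {d m : ℕ} (S : CAS d m) :
    ∃ L : ℝ, 0 ≤ L ∧ ∀ v ∈ S.ctrl, ∀ x y : Fin d → ℝ, ∀ t : ℝ, 0 ≤ t →
      dist (S.φ x v t) (S.φ y v t) ≤ dist x y * Real.exp (L * t) := by
  obtain ⟨K0, hK0⟩ := S.lip0
  choose Ki hKi using S.lip
  obtain ⟨R, hR⟩ := isBounded_iff_forall_norm_le.mp S.V_compact.isBounded
  have hR'0 : (0:ℝ) ≤ max R 0 := le_max_right _ _
  refine ⟨(K0 : ℝ) + max R 0 * ∑ i, (Ki i : ℝ), by positivity, ?_⟩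
  set L : ℝ := (K0 : ℝ) + max R 0 * ∑ i, (Ki i : ℝ) with hLdef
  have hL0 : 0 ≤ L := by rw [hLdef]; positivity
  rintro v ⟨hvm, hvV⟩ x y T hT
  have hFc : Continuous (S.φ x v) := S.φ_cont x v
  have hGc : Continuous (S.φ y v) := S.φ_cont y v
  have hvb : ∀ s (i : Fin m), ‖v s i‖ ≤ max R 0 := fun s i =>
    (norm_le_pi_norm (v s) i).trans ((hR _ (hvV s)).trans (le_max_left _ _))
  -- measurability of the integrand
  have hmeas : ∀ (H : ℝ → Fin d → ℝ), Continuous H →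
      Measurable (fun s => S.f0 (H s) + ∑ i, v s i • S.f i (H s)) := by
    intro H hH
    exact (((hK0.continuous.comp hH).measurable)).add
      (Finset.measurable_sum _ fun i _ =>
        (((measurable_pi_apply i).comp hvm).smul (((hKi i).continuous.comp hH).measurable)))
  -- interval integrability of the integrand on [0, t] for t ∈ [0, T]
  have hint : ∀ (H : ℝ → Fin d → ℝ), Continuous H → ∀ t ∈ Icc (0:ℝ) T,
      IntervalIntegrable (fun s => S.f0 (H s) + ∑ i, v s i • S.f i (H s)) volume 0 t := by
    intro H hH t ht
    obtain ⟨C0, hC0⟩ := isCompact_Icc.exists_bound_of_continuousOn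
      (s := Icc (0:ℝ) T) ((hK0.continuous.comp hH).continuousOn)
    have hCf : ∀ i : Fin m, ∃ C : ℝ, ∀ s ∈ Icc (0:ℝ) T, ‖S.f i (H s)‖ ≤ C := fun i =>
      isCompact_Icc.exists_bound_of_continuousOn (((hKi i).continuous.comp hH).continuousOn)
    choose Cf hCf using hCf
    have hbd : ∀ s ∈ Icc (0:ℝ) T,
        ‖S.f0 (H s) + ∑ i, v s i • S.f i (H s)‖ ≤ C0 + ∑ i, max R 0 * Cf i := by
      intro s hs
      refine (norm_add_le _ _).trans (add_le_add (hC0 s hs) ?_)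
      refine (norm_sum_le _ _).trans (Finset.sum_le_sum fun i _ => ?_)
      rw [norm_smul]
      exact mul_le_mul (hvb s i) (hCf i s hs) (norm_nonneg _) hR'0
    rw [intervalIntegrable_iff]
    refine Integrable.mono' (g := fun _ => C0 + ∑ i, max R 0 * Cf i)
      (integrableOn_const ?_) ((hmeas H hH).aestronglyMeasurable) ?_
    · rw [Set.uIoc_of_le ht.1]; exact measure_Ioc_lt_top.ne
    · refine ae_restrict_of_forall_mem measurableSet_uIoc fun s hs => hbd s ?_
      rw [Set.uIoc_of_le ht.1] at hs
      exact ⟨le_of_lt hs.1, hs.2.trans ht.2⟩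
  -- pointwise Lipschitz bound on the difference of integrands
  have hkey : ∀ s : ℝ,
      ‖(S.f0 (S.φ x v s) + ∑ i, v s i • S.f i (S.φ x v s)) -
        (S.f0 (S.φ y v s) + ∑ i, v s i • S.f i (S.φ y v s))‖
        ≤ L * dist (S.φ x v s) (S.φ y v s) := by
    intro s
    have h1 : (S.f0 (S.φ x v s) + ∑ i, v s i • S.f i (S.φ x v s)) -
        (S.f0 (S.φ y v s) + ∑ i, v s i • S.f i (S.φ y v s)) =
        (S.f0 (S.φ x v s) - S.f0 (S.φ y v s)) +
          ∑ i, v s i • (S.f i (S.φ x v s) - S.f i (S.φ y v s)) := by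
      simp only [smul_sub, Finset.sum_sub_distrib]
      abel
    rw [h1]
    have h2 : ‖S.f0 (S.φ x v s) - S.f0 (S.φ y v s)‖
        ≤ (K0 : ℝ) * dist (S.φ x v s) (S.φ y v s) := by
      rw [← dist_eq_norm]; exact hK0.dist_le_mul _ _
    have h3 : ‖∑ i, v s i • (S.f i (S.φ x v s) - S.f i (S.φ y v s))‖
        ≤ (max R 0 * ∑ i, (Ki i : ℝ)) * dist (S.φ x v s) (S.φ y v s) := by
      refine (norm_sum_le _ _).trans ?_
      have : ∀ i ∈ Finset.univ, ‖v s i • (S.f i (S.φ x v s) - S.f i (S.φ y v s))‖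
          ≤ max R 0 * ((Ki i : ℝ) * dist (S.φ x v s) (S.φ y v s)) := by
        intro i _
        rw [norm_smul]
        refine mul_le_mul (hvb s i) ?_ (norm_nonneg _) hR'0
        rw [← dist_eq_norm]; exact (hKi i).dist_le_mul _ _
      refine (Finset.sum_le_sum this).trans (le_of_eq ?_)
      rw [← Finset.mul_sum, ← Finset.sum_mul, mul_assoc]
    calc ‖(S.f0 (S.φ x v s) - S.f0 (S.φ y v s)) +
          ∑ i, v s i • (S.f i (S.φ x v s) - S.f i (S.φ y v s))‖
        ≤ ‖S.f0 (S.φ x v s) - S.f0 (S.φ y v s)‖ +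
            ‖∑ i, v s i • (S.f i (S.φ x v s) - S.f i (S.φ y v s))‖ := norm_add_le _ _
      _ ≤ (K0 : ℝ) * dist (S.φ x v s) (S.φ y v s) +
            (max R 0 * ∑ i, (Ki i : ℝ)) * dist (S.φ x v s) (S.φ y v s) :=
          add_le_add h2 h3
      _ = L * dist (S.φ x v s) (S.φ y v s) := by rw [hLdef, add_mul]
  -- the integral inequality
  have hginteg : ∀ t : ℝ,
      IntervalIntegrable (fun s => L * dist (S.φ x v s) (S.φ y v s)) volume 0 t :=
    fun t => (continuous_const.mul (hFc.dist hGc)).intervalIntegrable 0 t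
  have hmono : ∀ t ∈ Icc (0:ℝ) T, dist (S.φ x v t) (S.φ y v t)
      ≤ dist x y + ∫ s in (0:ℝ)..t, L * dist (S.φ x v s) (S.φ y v s) := by
    intro t ht
    have e1 := S.φ_sol x v hvm hvV t ht.1
    have e2 := S.φ_sol y v hvm hvV t ht.1
    have hsub : S.φ x v t - S.φ y v t = (x - y) +
        ∫ s in (0:ℝ)..t, ((S.f0 (S.φ x v s) + ∑ i, v s i • S.f i (S.φ x v s)) -
          (S.f0 (S.φ y v s) + ∑ i, v s i • S.f i (S.φ y v s))) := by
      rw [intervalIntegral.integral_sub (hint _ hFc t ht) (hint _ hGc t ht), e1, e2]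
      abel
    have hnn : (0:ℝ) ≤ ∫ s in (0:ℝ)..t, L * dist (S.φ x v s) (S.φ y v s) :=
      intervalIntegral.integral_nonneg ht.1 fun s _ => mul_nonneg hL0 dist_nonneg
    have hni : ‖∫ s in (0:ℝ)..t, ((S.f0 (S.φ x v s) + ∑ i, v s i • S.f i (S.φ x v s)) -
          (S.f0 (S.φ y v s) + ∑ i, v s i • S.f i (S.φ y v s)))‖
        ≤ ∫ s in (0:ℝ)..t, L * dist (S.φ x v s) (S.φ y v s) := by
      refine (intervalIntegral.norm_integral_le_abs_of_norm_le
        (Filter.Eventually.of_forall fun s => hkey s) (hginteg t)).trans ?_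
      rw [abs_of_nonneg hnn]
    calc dist (S.φ x v t) (S.φ y v t) = ‖S.φ x v t - S.φ y v t‖ := dist_eq_norm _ _
      _ = ‖(x - y) + ∫ s in (0:ℝ)..t,
            ((S.f0 (S.φ x v s) + ∑ i, v s i • S.f i (S.φ x v s)) -
             (S.f0 (S.φ y v s) + ∑ i, v s i • S.f i (S.φ y v s)))‖ := by rw [hsub]
      _ ≤ ‖x - y‖ + ‖∫ s in (0:ℝ)..t,
            ((S.f0 (S.φ x v s) + ∑ i, v s i • S.f i (S.φ x v s)) -
             (S.f0 (S.φ y v s) + ∑ i, v s i • S.f i (S.φ y v s)))‖ := norm_add_le _ _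
      _ ≤ dist x y + ∫ s in (0:ℝ)..t, L * dist (S.φ x v s) (S.φ y v s) := by
          rw [dist_eq_norm]; exact add_le_add_right hni _
  -- Grönwall via the primitive
  have hAderiv : ∀ t : ℝ, HasDerivAt
      (fun r => dist x y + ∫ s in (0:ℝ)..r, L * dist (S.φ x v s) (S.φ y v s))
      (L * dist (S.φ x v t) (S.φ y v t)) t := by
    intro t
    exact (intervalIntegral.integral_hasDerivAt_right (hginteg t)
      ((continuous_const.mul (hFc.dist hGc)).stronglyMeasurableAtFilter _ _)
      ((continuous_const.mul (hFc.dist hGc)).continuousAt)).const_add (dist x y)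
  have hAcont : Continuous
      (fun r => dist x y + ∫ s in (0:ℝ)..r, L * dist (S.φ x v s) (S.φ y v s)) :=
    continuous_iff_continuousAt.mpr fun t => (hAderiv t).continuousAt
  have hAnonneg : ∀ t : ℝ, 0 ≤ t →
      0 ≤ dist x y + ∫ s in (0:ℝ)..t, L * dist (S.φ x v s) (S.φ y v s) := fun t ht =>
    add_nonneg dist_nonneg (intervalIntegral.integral_nonneg ht fun s _ =>
      mul_nonneg hL0 dist_nonneg)
  have hgb := norm_le_gronwallBound_of_norm_deriv_right_le (a := 0) (b := T)
    (f := fun r => dist x y + ∫ s in (0:ℝ)..r, L * dist (S.φ x v s) (S.φ y v s))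
    (f' := fun t => L * dist (S.φ x v t) (S.φ y v t)) (δ := dist x y) (K := L) (ε := 0)
    hAcont.continuousOn (fun t _ => (hAderiv t).hasDerivWithinAt)
    (by
      show ‖dist x y + ∫ s in (0:ℝ)..(0:ℝ), L * dist (S.φ x v s) (S.φ y v s)‖ ≤ dist x y
      rw [intervalIntegral.integral_same, add_zero, Real.norm_eq_abs,
        abs_of_nonneg dist_nonneg])
    (by
      intro t htI
      rw [Real.norm_eq_abs, abs_of_nonneg (mul_nonneg hL0 dist_nonneg),
        Real.norm_eq_abs, abs_of_nonneg (hAnonneg t htI.1), add_zero]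
      exact mul_le_mul_of_nonneg_left (hmono t ⟨htI.1, le_of_lt htI.2⟩) hL0)
  have hTm : T ∈ Icc (0:ℝ) T := ⟨hT, le_rfl⟩
  have hfin := hgb T hTm
  rw [Real.norm_eq_abs, abs_of_nonneg (hAnonneg T hT), gronwallBound_ε0, sub_zero] at hfin
  exact (hmono T hTm).trans hfin

/-- the reachable set from a closure point of an invariant control set stays inside the
closure of that control set -/
theorem lemA {d m : ℕ} (S : CAS d m) {C : Set (Fin d → ℝ)} (hC : S.isInvControlSet C)
    {x : Fin d → ℝ} (hx : x ∈ closure C) : S.reach x ⊆ closure C := by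
  obtain ⟨L, hL0, hgron⟩ := S.gronwall
  rintro z ⟨v, hv, t, ht, rfl⟩
  rw [Metric.mem_closure_iff]
  intro ε hε
  have hexp : (0:ℝ) < Real.exp (L * t) := Real.exp_pos _
  obtain ⟨x', hx'C, hxx'⟩ := Metric.mem_closure_iff.mp hx (ε / 2 / Real.exp (L * t))
    (by positivity)
  have h1 : dist (S.φ x v t) (S.φ x' v t) ≤ dist x x' * Real.exp (L * t) :=
    hgron v hv x x' t ht
  have h2 : dist x x' * Real.exp (L * t) < ε / 2 := by
    have h := mul_lt_mul_of_pos_right hxx' hexp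
    rwa [div_mul_cancel₀ _ (ne_of_gt hexp)] at h
  -- φ x' v t ∈ closure C, hence some point of C is (ε/2)-close to it
  have hmem : S.φ x' v t ∈ closure C := by
    have : S.φ x' v t ∈ S.reach x' := ⟨v, hv, t, ht, rfl⟩
    have hcl := hC.2 x' hx'C
    exact hcl ▸ subset_closure this
  obtain ⟨c, hcC, hc⟩ := Metric.mem_closure_iff.mp hmem (ε / 2) (by positivity)
  refine ⟨c, hcC, ?_⟩
  calc dist (S.φ x v t) c ≤ dist (S.φ x v t) (S.φ x' v t) + dist (S.φ x' v t) c :=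
        dist_triangle _ _ _
    _ < ε / 2 + ε / 2 := add_lt_add_of_le_of_lt (h1.trans (le_of_lt h2)) hc
    _ = ε := add_halves ε

/-- two invariant control sets whose closures share a locally accessible point coincide -/
theorem lemB {d m : ℕ} (S : CAS d m) {C C' : Set (Fin d → ℝ)}
    (hC : S.isInvControlSet C) (hC' : S.isInvControlSet C') {p : Fin d → ℝ}
    (hp : p ∈ closure C) (hp' : p ∈ closure C') (hpa : S.locAccAt p) : C = C' := by
  obtain ⟨w, hwW, -⟩ := (hpa 1 one_pos univ Filter.univ_mem).1
  have hWsub : interior (S.reachLe 1 p) ⊆ S.reach p := fun z hz => by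
    obtain ⟨v, hv, t, ht, hzz⟩ := interior_subset hz
    exact ⟨v, hv, t, ht.1, hzz⟩
  have hWC : interior (S.reachLe 1 p) ⊆ closure C := fun z hz =>
    S.lemA hC hp (hWsub hz)
  have hWC' : interior (S.reachLe 1 p) ⊆ closure C' := fun z hz =>
    S.lemA hC' hp' (hWsub hz)
  -- pick a ∈ W ∩ C and b ∈ W ∩ C'
  obtain ⟨a, haW, haC⟩ : ∃ a, a ∈ interior (S.reachLe 1 p) ∧ a ∈ C := by
    obtain ⟨a, ha1, ha2⟩ := mem_closure_iff_nhds.mp (hWC hwW)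
      (interior (S.reachLe 1 p)) (isOpen_interior.mem_nhds hwW)
    exact ⟨a, ha1, ha2⟩
  obtain ⟨b, hbW, hbC'⟩ : ∃ b, b ∈ interior (S.reachLe 1 p) ∧ b ∈ C' := by
    obtain ⟨b, hb1, hb2⟩ := mem_closure_iff_nhds.mp (hWC' hwW)
      (interior (S.reachLe 1 p)) (isOpen_interior.mem_nhds hwW)
    exact ⟨b, hb1, hb2⟩
  have h1 : closure C ⊆ closure C' := by
    rw [hC.2 a haC]
    exact closure_minimal (S.lemA hC' (hWC' haW)) isClosed_closure
  have h2 : closure C' ⊆ closure C := by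
    rw [hC'.2 b hbC']
    exact closure_minimal (S.lemA hC (hWC hbW)) isClosed_closure
  have hprops : S.controlSetProps (C ∪ C') := by
    constructor
    · rintro z (hz | hz)
      · obtain ⟨v, hv, hinv⟩ := hC.1.2.1.1 z hz
        exact ⟨v, hv, fun t ht => Or.inl (hinv t ht)⟩
      · obtain ⟨v, hv, hinv⟩ := hC'.1.2.1.1 z hz
        exact ⟨v, hv, fun t ht => Or.inr (hinv t ht)⟩
    · rintro z (hz | hz)
      · rw [← hC.2 z hz]
        exact union_subset subset_closure (subset_closure.trans h2)
      · rw [← hC'.2 z hz]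
        exact union_subset (subset_closure.trans h1) subset_closure
  have e1 := hC.1.2.2 (C ∪ C') subset_union_left hprops
  have e2 := hC'.1.2.2 (C ∪ C') subset_union_right hprops
  exact e1.symm.trans e2

end CAS

/-- If the system is locally accessible on a positively invariant
set `M` and `K ⊆ M` is compact, then only finitely many invariant control sets in
`M` intersect `K`. -/
theorem stmt8 {d m : ℕ} (S : CAS d m) (M K : Set (Fin d → ℝ))
    (hM : S.posInv M) (hacc : S.locAccOn M) (hK : IsCompact K) (hKM : K ⊆ M) :
    {C : Set (Fin d → ℝ) | S.isInvControlSet C ∧ C ⊆ M ∧ (C ∩ K).Nonempty}.Finite := by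
  classical
  by_contra hfin
  have hinf : {C : Set (Fin d → ℝ) | S.isInvControlSet C ∧ C ⊆ M ∧ (C ∩ K).Nonempty}.Infinite :=
    hfin
  obtain ⟨L, hL0, hgron⟩ := S.gronwall
  set 𝒞 := {C : Set (Fin d → ℝ) | S.isInvControlSet C ∧ C ⊆ M ∧ (C ∩ K).Nonempty} with h𝒞
  let e : ℕ ↪ 𝒞 := hinf.natEmbedding
  have hxc : ∀ n : ℕ, ∃ x, x ∈ (e n : Set (Fin d → ℝ)) ∧ x ∈ K := by
    intro n
    obtain ⟨x, hx1, hx2⟩ := (e n).2.2.2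
    exact ⟨x, hx1, hx2⟩
  choose xs hxsC hxsK using hxc
  obtain ⟨c, hcK, σ, hσ, hlim⟩ := hK.tendsto_subseq hxsK
  have hcM : c ∈ M := hKM hcK
  -- a point b reachable from c, lying in the interior of the reachable set
  obtain ⟨b, hbW, -⟩ := (hacc c hcM 1 one_pos univ Filter.univ_mem).1
  obtain ⟨w₀, hw₀, t₀, ht₀, hb⟩ := interior_subset hbW
  have hbM : b ∈ M := hb ▸ hM c hcM w₀ hw₀ t₀ ht₀.1
  -- an open set U near b, inside the controllable set of b, and inside reachLe 1 c
  obtain ⟨u, hu1, hu2⟩ := (hacc b hbM 1 one_pos (interior (S.reachLe 1 c))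
    (isOpen_interior.mem_nhds hbW)).2
  obtain ⟨w', hw', s', hs', hu⟩ := interior_subset hu2
  obtain ⟨r, hr, hball⟩ := Metric.isOpen_iff.mp isOpen_interior u hu1
  have hballsub : Metric.ball u r ⊆ S.contrLe 1 b := hball.trans interior_subset
  set δ : ℝ := r * Real.exp (-(L * 1)) with hδdef
  have hδ : 0 < δ := by positivity
  -- key: any invariant control set containing a point δ-close to c has b in its closure
  have key : ∀ C' : Set (Fin d → ℝ), S.isInvControlSet C' →
      ∀ x' ∈ C', dist x' c < δ → b ∈ closure C' := by
    intro C' hC' x' hx' hd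
    have hstep : dist (S.φ x' w' s') (S.φ c w' s') ≤ dist x' c * Real.exp (L * s') :=
      hgron w' hw' x' c s' hs'.1
    have hlt : dist x' c * Real.exp (L * s') < r := by
      have h1 : Real.exp (L * s') ≤ Real.exp (L * 1) :=
        Real.exp_le_exp.mpr (mul_le_mul_of_nonneg_left hs'.2 hL0)
      calc dist x' c * Real.exp (L * s') ≤ dist x' c * Real.exp (L * 1) :=
            mul_le_mul_of_nonneg_left h1 dist_nonneg
        _ < δ * Real.exp (L * 1) := by
            exact mul_lt_mul_of_pos_right hd (Real.exp_pos _)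
        _ = r := by
            rw [hδdef, mul_assoc, ← Real.exp_add, neg_add_cancel, Real.exp_zero, mul_one]
    have hpball : S.φ x' w' s' ∈ Metric.ball u r := by
      rw [Metric.mem_ball, ← hu]
      exact lt_of_le_of_lt hstep hlt
    have hpC' : S.φ x' w' s' ∈ closure C' := by
      have : S.φ x' w' s' ∈ S.reach x' := ⟨w', hw', s', hs'.1, rfl⟩
      exact (hC'.2 x' hx') ▸ subset_closure this
    obtain ⟨v'', hv'', t'', ht'', hpb⟩ := hballsub hpball
    have : b ∈ S.reach (S.φ x' w' s') := ⟨v'', hv'', t'', ht''.1, hpb⟩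
    exact S.lemA hC' hpC' this
  -- two distinct members of the family δ-close to c
  obtain ⟨N, hN⟩ := Metric.tendsto_atTop.mp hlim δ hδ
  have hb1 : b ∈ closure (e (σ N) : Set (Fin d → ℝ)) :=
    key _ (e (σ N)).2.1 _ (hxsC (σ N)) (hN N le_rfl)
  have hb2 : b ∈ closure (e (σ (N + 1)) : Set (Fin d → ℝ)) :=
    key _ (e (σ (N + 1))).2.1 _ (hxsC (σ (N + 1))) (hN (N + 1) (Nat.le_succ N))
  have heq : (e (σ N) : Set (Fin d → ℝ)) = (e (σ (N + 1)) : Set (Fin d → ℝ)) :=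
    S.lemB (e (σ N)).2.1 (e (σ (N + 1))).2.1 hb1 hb2 (hacc b hbM)
  have : σ N = σ (N + 1) := e.injective (Subtype.ext heq)
  exact absurd this (ne_of_lt (hσ (Nat.lt_succ_self N)))
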